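/- For a binary form p(x1,x2) = Σ_{i=0}^d C(d,i) c_i x1^i x2^{d-i} over ℂ, p can be written as a sum p = Σ_{j=1}^r λ_j (α_j x1 + β_j x2)^d with r distinct linear forms if and only if (i) there exists a nonzero vector q = (q_0,...,q_r) in the kernel of the (d-r+1)×(r+1) Hankel matrix H with entries H_{ij} = c_{i+j-2}, and (ii) the polynomial q(x1,x2) = Σ_{ℓ=0}^r q_ℓ x1^ℓ x2^{r-ℓ} has r distinct roots in ℙ^1. -/

import Mathlib

open MvPolynomial


noncomputable def homog (n : ℕ) (f : Polynomial ℂ) : MvPolynomial (Fin 2) ℂ :=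
  ∑ ℓ ∈ Finset.range (n+1), C (f.coeff ℓ) * X 0 ^ ℓ * X 1 ^ (n - ℓ)

lemma eval_homog (n : ℕ) (f : Polynomial ℂ) (x y : ℂ) :
    MvPolynomial.eval ![x, y] (homog n f)
      = ∑ ℓ ∈ Finset.range (n+1), f.coeff ℓ * x ^ ℓ * y ^ (n - ℓ) := by
  simp [homog]

lemma homog_linear_mul (n : ℕ) (a b : ℂ) (f : Polynomial ℂ) (hf : f.natDegree ≤ n) :
    homog (n+1) ((Polynomial.C b * Polynomial.X - Polynomial.C a) * f)
      = (C b * X 0 - C a * X 1) * homog n f := by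
  have hc : ∀ ℓ, ((Polynomial.C b * Polynomial.X - Polynomial.C a) * f).coeff ℓ
      = b * (Polynomial.X * f).coeff ℓ - a * f.coeff ℓ := by
    intro ℓ
    rw [sub_mul, Polynomial.coeff_sub, mul_assoc, Polynomial.coeff_C_mul,
      Polynomial.coeff_C_mul]
  have key : homog (n+1) ((Polynomial.C b * Polynomial.X - Polynomial.C a) * f)
      = (∑ ℓ ∈ Finset.range (n+1+1), C (b * (Polynomial.X * f).coeff ℓ) * X 0 ^ ℓ * X 1 ^ (n+1-ℓ))
        - (∑ ℓ ∈ Finset.range (n+1+1), C (a * f.coeff ℓ) * X 0 ^ ℓ * X 1 ^ (n+1-ℓ)) := by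
    rw [homog, ← Finset.sum_sub_distrib]
    refine Finset.sum_congr rfl fun ℓ _ => ?_
    rw [hc, map_sub]
    ring
  rw [key]
  have h1 : (∑ ℓ ∈ Finset.range (n+1+1), C (b * (Polynomial.X * f).coeff ℓ) * X 0 ^ ℓ * X 1 ^ (n+1-ℓ))
      = C b * X 0 * homog n f := by
    rw [Finset.sum_range_succ']
    have h0 : (Polynomial.X * f).coeff 0 = 0 := by
      simp [Polynomial.mul_coeff_zero]
    rw [homog, Finset.mul_sum]
    simp only [h0, mul_zero, map_zero, zero_mul, add_zero, Polynomial.coeff_X_mul]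
    refine Finset.sum_congr rfl fun ℓ hℓ => ?_
    have : n + 1 - (ℓ + 1) = n - ℓ := by omega
    rw [this, map_mul]
    ring
  have h2 : (∑ ℓ ∈ Finset.range (n+1+1), C (a * f.coeff ℓ) * X 0 ^ ℓ * X 1 ^ (n+1-ℓ))
      = C a * X 1 * homog n f := by
    rw [Finset.sum_range_succ]
    have h0 : f.coeff (n+1) = 0 :=
      Polynomial.coeff_eq_zero_of_natDegree_lt (lt_of_le_of_lt hf (by omega))
    rw [homog, Finset.mul_sum]
    simp only [h0, mul_zero, map_zero, zero_mul, add_zero]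
    refine Finset.sum_congr rfl fun ℓ hℓ => ?_
    have hℓ' : ℓ ≤ n := by simpa [Nat.lt_succ_iff] using hℓ
    have : n + 1 - ℓ = (n - ℓ) + 1 := by omega
    rw [this, map_mul, pow_succ]
    ring
  rw [h1, h2]
  ring

noncomputable def linPoly (p : ℂ × ℂ) : Polynomial ℂ :=
  Polynomial.C p.2 * Polynomial.X - Polynomial.C p.1

noncomputable def linMv (p : ℂ × ℂ) : MvPolynomial (Fin 2) ℂ :=
  C p.2 * X 0 - C p.1 * X 1

lemma natDegree_linPoly (p : ℂ × ℂ) : (linPoly p).natDegree ≤ 1 := by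
  have : linPoly p = Polynomial.C p.2 * Polynomial.X + Polynomial.C (-p.1) := by
    simp [linPoly, sub_eq_add_neg]
  rw [this]
  exact Polynomial.natDegree_linear_le

lemma natDegree_multiset_lin (M : Multiset (ℂ × ℂ)) :
    (M.map linPoly).prod.natDegree ≤ Multiset.card M := by
  refine le_trans (Polynomial.natDegree_multiset_prod_le _) ?_
  rw [Multiset.map_map]
  refine le_trans (Multiset.sum_le_card_nsmul _ 1 ?_) (by simp)
  intro x hx
  obtain ⟨p, _, rfl⟩ := Multiset.mem_map.mp hx
  exact natDegree_linPoly p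

lemma homog_multiset (M : Multiset (ℂ × ℂ)) :
    homog (Multiset.card M) ((M.map linPoly).prod) = (M.map linMv).prod := by
  induction M using Multiset.induction with
  | empty => simp [homog]
  | cons p M ih =>
    rw [Multiset.map_cons, Multiset.map_cons, Multiset.prod_cons, Multiset.prod_cons,
      Multiset.card_cons, linPoly,
      homog_linear_mul _ p.1 p.2 _ (natDegree_multiset_lin M), ih]
    rfl

lemma eval_multiset_lin (M : Multiset (ℂ × ℂ)) (x y : ℂ) :
    ∑ ℓ ∈ Finset.range (Multiset.card M + 1),
        ((M.map linPoly).prod).coeff ℓ * x ^ ℓ * y ^ (Multiset.card M - ℓ)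
      = (M.map (fun p => p.2 * x - p.1 * y)).prod := by
  have h := congrArg (MvPolynomial.eval ![x,y]) (homog_multiset M)
  rw [eval_homog] at h
  rw [h, map_multiset_prod, Multiset.map_map]
  congr 1
  refine Multiset.map_congr rfl fun p _ => ?_
  simp [linMv]

lemma homog_inj (n : ℕ) {f g : Polynomial ℂ} (hf : f.natDegree ≤ n) (hg : g.natDegree ≤ n)
    (h : homog n f = homog n g) : f = g := by
  apply Polynomial.funext
  intro x
  have h2 := congrArg (MvPolynomial.eval ![x,1]) h
  rw [eval_homog, eval_homog] at h2
  simp only [one_pow, mul_one] at h2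
  rw [Polynomial.eval_eq_sum_range' (lt_of_le_of_lt hf (Nat.lt_succ_self n)),
    Polynomial.eval_eq_sum_range' (lt_of_le_of_lt hg (Nat.lt_succ_self n))]
  exact h2

noncomputable def ofVec {n : ℕ} (q : Fin (n+1) → ℂ) : Polynomial ℂ :=
  ∑ ℓ : Fin (n+1), Polynomial.C (q ℓ) * Polynomial.X ^ (ℓ : ℕ)

lemma natDegree_ofVec {n : ℕ} (q : Fin (n+1) → ℂ) : (ofVec q).natDegree ≤ n := by
  refine Polynomial.natDegree_sum_le_of_forall_le _ _ fun ℓ _ => ?_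
  refine le_trans (Polynomial.natDegree_C_mul_le _ _) ?_
  simpa using Nat.lt_succ_iff.mp ℓ.isLt

lemma coeff_ofVec {n : ℕ} (q : Fin (n+1) → ℂ) (k : Fin (n+1)) :
    (ofVec q).coeff (k : ℕ) = q k := by
  rw [ofVec, Polynomial.finset_sum_coeff]
  rw [Finset.sum_eq_single k]
  · simp
  · intro ℓ _ hℓ
    simp only [Polynomial.coeff_C_mul, Polynomial.coeff_X_pow]
    rw [if_neg (by simpa [Fin.ext_iff] using fun hc => hℓ (by omega))]
    ring
  · simp

lemma homog_ofVec {n : ℕ} (q : Fin (n+1) → ℂ) :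
    homog n (ofVec q) = ∑ ℓ : Fin (n+1), C (q ℓ) * X 0 ^ (ℓ : ℕ) * X 1 ^ (n - (ℓ : ℕ)) := by
  rw [homog, ← Fin.sum_univ_eq_sum_range
    (fun ℓ => C ((ofVec q).coeff ℓ) * X 0 ^ ℓ * X 1 ^ (n - ℓ)) (n+1)]
  exact Finset.sum_congr rfl fun ℓ _ => by rw [coeff_ofVec]

lemma homog_linear_pow (dd : ℕ) (α β : ℂ) :
    homog dd ((Polynomial.C α * Polynomial.X + Polynomial.C β)^dd)
      = (C α * X 0 + C β * X 1)^dd := by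
  have h := homog_multiset (Multiset.replicate dd (-β, α))
  have e1 : linPoly (-β, α) = Polynomial.C α * Polynomial.X + Polynomial.C β := by
    simp [linPoly, sub_eq_add_neg]
  have e2 : linMv (-β, α) = C α * X 0 + C β * X 1 := by
    simp [linMv, sub_eq_add_neg]
  rw [Multiset.map_replicate, Multiset.map_replicate, e1, e2, Multiset.prod_replicate,
    Multiset.prod_replicate, Multiset.card_replicate] at h
  exact h

lemma coeff_linear_pow (dd k : ℕ) (α β : ℂ) (hk : k ≤ dd) :
    ((Polynomial.C α * Polynomial.X + Polynomial.C β)^dd).coeff k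
      = (dd.choose k : ℂ) * α^k * β^(dd-k) := by
  rw [add_pow, Polynomial.finset_sum_coeff]
  have hterm : ∀ m : ℕ, (Polynomial.C α * Polynomial.X)^m * Polynomial.C β^(dd-m)
        * (dd.choose m : Polynomial ℂ)
      = Polynomial.C (α^m * β^(dd-m) * (dd.choose m : ℂ)) * Polynomial.X^m := by
    intro m
    simp only [mul_pow, ← Polynomial.C_pow]
    rw [← Polynomial.C_eq_natCast, map_mul, map_mul]
    ring
  simp only [hterm]
  rw [Finset.sum_eq_single k]
  · simp only [Polynomial.coeff_C_mul, Polynomial.coeff_X_pow]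
    simp
    ring
  · intro m _ hm
    simp only [Polynomial.coeff_C_mul, Polynomial.coeff_X_pow]
    rw [if_neg (fun hc => hm hc.symm)]
    ring
  · intro hc
    exact absurd (Finset.mem_range.mpr (by omega)) hc

lemma linPoly_ne_zero {p : ℂ × ℂ} (hp : p ≠ (0,0)) : linPoly p ≠ 0 := by
  intro h
  apply hp
  have h0 := congrArg (fun g => Polynomial.coeff g 0) h
  have h1 := congrArg (fun g => Polynomial.coeff g 1) h
  simp [linPoly] at h0 h1
  ext <;> simp [h0, h1]

noncomputable def finMS {r : ℕ} (a b : Fin r → ℂ) : Multiset (ℂ × ℂ) :=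
  Finset.univ.val.map (fun j : Fin r => (a j, b j))

lemma card_finMS {r : ℕ} (a b : Fin r → ℂ) : Multiset.card (finMS a b) = r := by
  simp [finMS]

lemma prod_finMS {r : ℕ} {γ : Type*} [CommMonoid γ] (a b : Fin r → ℂ) (g : ℂ × ℂ → γ) :
    ((finMS a b).map g).prod = ∏ j : Fin r, g (a j, b j) := by
  rw [finMS, Multiset.map_map, Finset.prod_eq_multiset_prod]
  rfl

lemma natDegree_prod_fin {r : ℕ} (a b : Fin r → ℂ) :
    (∏ j, linPoly (a j, b j)).natDegree ≤ r := by
  have := natDegree_multiset_lin (finMS a b)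
  rwa [prod_finMS, card_finMS] at this

lemma homog_prod_fin {r : ℕ} (a b : Fin r → ℂ) :
    homog r (∏ j, linPoly (a j, b j)) = ∏ j, (C (b j) * X 0 - C (a j) * X 1) := by
  have h := homog_multiset (finMS a b)
  rw [prod_finMS, prod_finMS, card_finMS] at h
  exact h

lemma coeff_prod_eval {r : ℕ} (a b : Fin r → ℂ) (x y : ℂ) :
    ∑ ℓ ∈ Finset.range (r+1), (∏ j, linPoly (a j, b j)).coeff ℓ * x^ℓ * y^(r-ℓ)
      = ∏ j, (b j * x - a j * y) := by
  have h := eval_multiset_lin (finMS a b) x y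
  rw [prod_finMS, prod_finMS, card_finMS] at h
  exact h

lemma coeff_prod_eval_fin {r : ℕ} (a b : Fin r → ℂ) (x y : ℂ) :
    ∑ ℓ : Fin (r+1), (∏ j, linPoly (a j, b j)).coeff (ℓ:ℕ) * x^(ℓ:ℕ) * y^(r-(ℓ:ℕ))
      = ∏ j, (b j * x - a j * y) := by
  rw [Fin.sum_univ_eq_sum_range
    (fun ℓ => (∏ j, linPoly (a j, b j)).coeff ℓ * x^ℓ * y^(r-ℓ)) (r+1)]
  exact coeff_prod_eval a b x y

lemma kernel_step {d r : ℕ} (hr : r ≤ d) (a b lam : Fin r → ℂ) (i : ℕ) (hi : i ≤ d - r) :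
    ∑ ℓ : Fin (r+1), (∑ j, lam j * a j ^ (i+(ℓ:ℕ)) * b j ^ (d-(i+(ℓ:ℕ))))
        * (∏ j, linPoly (a j, b j)).coeff (ℓ:ℕ) = 0 := by
  have step : ∀ ℓ : Fin (r+1),
      (∑ j, lam j * a j ^ (i+(ℓ:ℕ)) * b j ^ (d-(i+(ℓ:ℕ))))
          * (∏ j, linPoly (a j, b j)).coeff (ℓ:ℕ)
        = ∑ j, (lam j * a j ^ i * b j ^ (d-r-i))
            * ((∏ j, linPoly (a j, b j)).coeff (ℓ:ℕ) * a j ^ (ℓ:ℕ) * b j ^ (r-(ℓ:ℕ))) := by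
    intro ℓ
    rw [Finset.sum_mul]
    refine Finset.sum_congr rfl fun j _ => ?_
    have h1 : a j ^ (i + (ℓ:ℕ)) = a j ^ i * a j ^ (ℓ:ℕ) := pow_add _ _ _
    have h2 : d - (i + (ℓ:ℕ)) = (d - r - i) + (r - (ℓ:ℕ)) := by
      have := ℓ.isLt; omega
    rw [h1, h2, pow_add]
    ring
  rw [Finset.sum_congr rfl (fun ℓ _ => step ℓ), Finset.sum_comm]
  refine Finset.sum_eq_zero fun j _ => ?_
  rw [← Finset.mul_sum, coeff_prod_eval_fin]
  rw [Finset.prod_eq_zero (Finset.mem_univ j) (by ring : b j * a j - a j * b j = 0)]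
  ring

open Complex in
lemma key_exists (d r : ℕ) (hr : r ≤ d) (a b : Fin r → ℂ)
    (hab : ∀ j, (a j, b j) ≠ (0,0))
    (hdist : ∀ j k, j ≠ k → a j * b k ≠ a k * b j)
    (c : Fin (d+1) → ℂ)
    (hker : ∀ i : Fin (d - r + 1), ∑ ℓ : Fin (r + 1),
        c ⟨(i:ℕ)+(ℓ:ℕ), by have := i.isLt; have := ℓ.isLt; exact lt_of_lt_of_le (by omega) le_rfl⟩
          * (∏ j, linPoly (a j, b j)).coeff (ℓ:ℕ) = 0) :
    ∃ lam : Fin r → ℂ, ∀ i : Fin (d+1),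
      c i = ∑ j, lam j * a j ^ (i:ℕ) * b j ^ (d-(i:ℕ)) := by
  classical
  set F := ∏ j, linPoly (a j, b j) with hF
  have hFne : F ≠ 0 := Finset.prod_ne_zero_iff.mpr fun j _ => linPoly_ne_zero (hab j)
  set m := F.natDegree with hm'
  have hm : m ≤ r := natDegree_prod_fin a b
  have hqm : F.coeff m ≠ 0 := by
    rw [← Polynomial.leadingCoeff]
    exact Polynomial.leadingCoeff_ne_zero.mpr hFne
  -- the Hankel-type linear map
  let T : (Fin (d+1) → ℂ) →ₗ[ℂ] (Fin (d-r+1) → ℂ) :=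
    { toFun := fun v i => ∑ ℓ : Fin (r+1),
        v ⟨(i:ℕ)+(ℓ:ℕ), by have := i.isLt; have := ℓ.isLt; exact lt_of_lt_of_le (by omega) le_rfl⟩ * F.coeff (ℓ:ℕ)
      map_add' := by
        intro u v; funext i
        simp [add_mul, Finset.sum_add_distrib]
      map_smul' := by
        intro s v; funext i
        simp [Finset.mul_sum, mul_assoc] }
  -- the power-sum parametrization
  let L : (Fin r → ℂ) →ₗ[ℂ] (Fin (d+1) → ℂ) :=
    { toFun := fun lam i => ∑ j, lam j * a j ^ (i:ℕ) * b j ^ (d-(i:ℕ))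
      map_add' := by
        intro u v; funext i
        simp [add_mul, Finset.sum_add_distrib]
      map_smul' := by
        intro s v; funext i
        simp [Finset.mul_sum, mul_assoc] }
  have hrange : LinearMap.range L ≤ LinearMap.ker T := by
    rintro v ⟨lam, rfl⟩
    rw [LinearMap.mem_ker]
    funext i
    have h := kernel_step hr a b lam (i : ℕ) (by have := i.isLt; omega)
    exact h
  -- injectivity of L
  have hLinj : Function.Injective L := by
    rw [injective_iff_map_eq_zero]
    intro lam h0
    funext j
    set u := (starRingEnd ℂ) (a j) with hu
    set v := (starRingEnd ℂ) (b j) with hv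
    set M : Multiset (ℂ × ℂ) :=
      Multiset.replicate (d-r+1) (-v, u)
        + (Finset.univ.erase j).val.map (fun k => (a k, b k)) with hM
    have hcard : Multiset.card M = d := by
      have : j ∈ Finset.univ := Finset.mem_univ j
      simp [hM, Finset.card_erase_of_mem this]
      have hr0 : 0 < r := j.pos
      omega
    set G := (M.map linPoly).prod with hG
    have hval : ∀ k : Fin r, ∑ i ∈ Finset.range (d+1), G.coeff i * (a k)^i * (b k)^(d-i)
        = (u * a k + v * b k)^(d-r+1)
            * ∏ k' ∈ Finset.univ.erase j, (b k' * a k - a k' * b k) := by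
      intro k
      have h := eval_multiset_lin M (a k) (b k)
      rw [hcard] at h
      rw [← hG] at h
      rw [h, hM, Multiset.map_add, Multiset.prod_add, Multiset.map_replicate,
        Multiset.prod_replicate, Multiset.map_map, Finset.prod_eq_multiset_prod]
      simp only [Function.comp, neg_mul, sub_neg_eq_add]
    have hLzero : ∀ i : ℕ, i < d + 1 → (∑ k, lam k * a k ^ i * b k ^ (d - i)) = 0 := by
      intro i hi
      have h := congrFun h0 ⟨i, hi⟩
      simpa [L] using h
    have hsum : ∑ k : Fin r, lam k *
        ((u * a k + v * b k)^(d-r+1)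
          * ∏ k' ∈ Finset.univ.erase j, (b k' * a k - a k' * b k)) = 0 := by
      have e1 : ∑ i ∈ Finset.range (d+1),
          G.coeff i * (∑ k, lam k * a k ^ i * b k ^ (d-i)) = 0 :=
        Finset.sum_eq_zero fun i hi => by
          rw [hLzero i (Finset.mem_range.mp hi), mul_zero]
      have swap : ∑ k : Fin r, lam k * ∑ i ∈ Finset.range (d+1),
            G.coeff i * a k ^ i * b k ^ (d-i)
          = ∑ i ∈ Finset.range (d+1),
              G.coeff i * ∑ k : Fin r, lam k * a k ^ i * b k ^ (d-i) := by
        simp only [Finset.mul_sum]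
        rw [Finset.sum_comm]
        exact Finset.sum_congr rfl fun i _ => Finset.sum_congr rfl fun k _ => by ring
      calc ∑ k : Fin r, lam k * ((u * a k + v * b k)^(d-r+1)
              * ∏ k' ∈ Finset.univ.erase j, (b k' * a k - a k' * b k))
          = ∑ k : Fin r, lam k * ∑ i ∈ Finset.range (d+1),
              G.coeff i * a k ^ i * b k ^ (d-i) := by
            exact Finset.sum_congr rfl fun k _ => by rw [hval k]
        _ = ∑ i ∈ Finset.range (d+1),
              G.coeff i * ∑ k : Fin r, lam k * a k ^ i * b k ^ (d-i) := swap
        _ = 0 := e1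
    rw [Finset.sum_eq_single j (fun k _ hkj => by
        rw [Finset.prod_eq_zero (Finset.mem_erase.mpr ⟨hkj, Finset.mem_univ k⟩)
          (by ring : b k * a k - a k * b k = 0), mul_zero, mul_zero])
      (fun hj => absurd (Finset.mem_univ j) hj)] at hsum
    have hpow : (u * a j + v * b j) ≠ 0 := by
      have he : u * a j + v * b j = ((normSq (a j) + normSq (b j) : ℝ) : ℂ) := by
        rw [hu, hv, mul_comm _ (a j), Complex.mul_conj, mul_comm _ (b j), Complex.mul_conj]
        push_cast
        ring
      rw [he, Ne, Complex.ofReal_eq_zero]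
      have hpos : 0 < normSq (a j) + normSq (b j) := by
        rcases eq_or_ne (a j) 0 with h1 | h1
        · have h2 : b j ≠ 0 := fun h2 => hab j (by rw [h1, h2])
          have := Complex.normSq_pos.mpr h2
          have := Complex.normSq_nonneg (a j)
          linarith
        · have := Complex.normSq_pos.mpr h1
          have := Complex.normSq_nonneg (b j)
          linarith
      exact ne_of_gt hpos
    have hprod : ∏ k' ∈ Finset.univ.erase j, (b k' * a j - a k' * b j) ≠ 0 := by
      rw [Finset.prod_ne_zero_iff]
      intro k' hk'
      have hkj : k' ≠ j := (Finset.mem_erase.mp hk').1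
      exact sub_ne_zero.mpr (by rw [mul_comm]; exact hdist j k' (Ne.symm hkj))
    have hne := mul_ne_zero (pow_ne_zero (d-r+1) hpow) hprod
    simpa using (mul_eq_zero.mp hsum).resolve_right hne
  -- the coordinate-restriction map proving dim (ker T) ≤ r
  have hσlt : ∀ j : Fin r, (if (j:ℕ) < m then (j:ℕ) else (j:ℕ) + (d-r+1)) < d + 1 := by
    intro j
    have := j.isLt
    split <;> omega
  set σ : Fin r → Fin (d+1) := fun j => ⟨_, hσlt j⟩ with hσ
  set φ : (LinearMap.ker T) →ₗ[ℂ] (Fin r → ℂ) :=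
    (LinearMap.funLeft ℂ ℂ σ).comp (LinearMap.ker T).subtype with hφ
  have hφinj : Function.Injective φ := by
    rw [injective_iff_map_eq_zero]
    rintro ⟨v, hv⟩ hz
    have hv' := LinearMap.mem_ker.mp hv
    have hzero : ∀ n, ∀ hn : n < d + 1, v ⟨n, hn⟩ = 0 := by
      intro n
      induction n using Nat.strong_induction_on with
      | _ n IH =>
        intro hn
        by_cases h1 : n < m
        · have hjr : n < r := lt_of_lt_of_le h1 hm
          have h := congrFun hz ⟨n, hjr⟩
          simp only [hφ, LinearMap.comp_apply, Submodule.coe_subtype,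
            LinearMap.funLeft_apply, Pi.zero_apply] at h
          rw [show σ ⟨n, hjr⟩ = ⟨n, hn⟩ by
            rw [hσ]; exact Fin.ext (by simp [h1])] at h
          exact h
        · by_cases h2 : n ≤ d - r + m
          · have hi : n - m < d - r + 1 := by omega
            have hrow := congrFun hv' ⟨n - m, hi⟩
            simp only [T, LinearMap.coe_mk, AddHom.coe_mk, Pi.zero_apply] at hrow
            rw [Finset.sum_eq_single (⟨m, by omega⟩ : Fin (r+1))
              (fun ℓ _ hℓ => by
                by_cases hc : (ℓ:ℕ) < m
                · rw [IH ((n-m)+(ℓ:ℕ)) (by omega) (by omega), zero_mul]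
                · have hgt : m < (ℓ:ℕ) := by
                    rcases Nat.lt_or_ge m (ℓ:ℕ) with h | h
                    · exact h
                    · exact absurd (Fin.ext (by omega : (ℓ:ℕ) = m)) hℓ
                  rw [Polynomial.coeff_eq_zero_of_natDegree_lt hgt, mul_zero])
              (fun hmem => absurd (Finset.mem_univ _) hmem)] at hrow
            have : ((⟨n - m, hi⟩ : Fin (d-r+1)) : ℕ) + ((⟨m, by omega⟩ : Fin (r+1)) : ℕ) = n := by
              simp; omega
            rw [show (⟨((⟨n - m, hi⟩ : Fin (d-r+1)) : ℕ) + ((⟨m, by omega⟩ : Fin (r+1)) : ℕ),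
                by omega⟩ : Fin (d+1)) = ⟨n, hn⟩ from Fin.ext (by simp; omega)] at hrow
            exact (mul_eq_zero.mp hrow).resolve_right hqm
          · have hr0 : 0 < r := by omega
            have hjr : n - (d - r + 1) < r := by omega
            have h := congrFun hz ⟨n - (d - r + 1), hjr⟩
            simp only [hφ, LinearMap.comp_apply, Submodule.coe_subtype,
              LinearMap.funLeft_apply, Pi.zero_apply] at h
            rw [show σ ⟨n - (d - r + 1), hjr⟩ = ⟨n, hn⟩ by
              rw [hσ]
              refine Fin.ext ?_
              show (if _ then _ else _) = n
              rw [if_neg (by simp; omega)]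
              simp; omega] at h
            exact h
    refine Subtype.ext ?_
    funext i
    have h := hzero (i : ℕ) i.isLt
    simpa using h
  have hrankK : Module.finrank ℂ (LinearMap.ker T) ≤ r := by
    have h := LinearMap.finrank_le_finrank_of_injective hφinj
    rwa [Module.finrank_fintype_fun_eq_card, Fintype.card_fin] at h
  have hrangeEq : LinearMap.range L = LinearMap.ker T := by
    apply Submodule.eq_of_le_of_finrank_le hrange
    rw [LinearMap.finrank_range_of_inj hLinj, Module.finrank_fintype_fun_eq_card,
      Fintype.card_fin]
    exact hrankK
  have hcK : c ∈ LinearMap.ker T := by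
    rw [LinearMap.mem_ker]
    funext i
    exact hker i
  rw [← hrangeEq] at hcK
  obtain ⟨lam, hlam⟩ := hcK
  refine ⟨lam, fun i => ?_⟩
  rw [← hlam]
  rfl

lemma homog_sum {n : ℕ} {ι : Type*} (s : Finset ι) (f : ι → Polynomial ℂ) :
    homog n (∑ j ∈ s, f j) = ∑ j ∈ s, homog n (f j) := by
  simp only [homog, Polynomial.finset_sum_coeff, map_sum, Finset.sum_mul]
  exact Finset.sum_comm

lemma homog_Cmul (n : ℕ) (s : ℂ) (f : Polynomial ℂ) :
    homog n (Polynomial.C s * f) = C s * homog n f := by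
  simp only [homog, Polynomial.coeff_C_mul, map_mul, Finset.mul_sum]
  exact Finset.sum_congr rfl fun ℓ _ => by ring

lemma ofVec_eq_iff {n : ℕ} (q : Fin (n+1) → ℂ) (g : Polynomial ℂ) (hg : g.natDegree ≤ n) :
    ofVec q = g ↔ ∀ i : Fin (n+1), q i = g.coeff (i:ℕ) := by
  constructor
  · intro h i
    rw [← h, coeff_ofVec]
  · intro h
    ext k
    by_cases hk : k ≤ n
    · have h1 := coeff_ofVec q ⟨k, by omega⟩
      have h2 := h ⟨k, by omega⟩
      simp only at h1 h2
      rw [h1, h2]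
    · rw [Polynomial.coeff_eq_zero_of_natDegree_lt
          (lt_of_le_of_lt (natDegree_ofVec q) (by omega)),
        Polynomial.coeff_eq_zero_of_natDegree_lt (lt_of_le_of_lt hg (by omega))]

lemma E2_iff (r : ℕ) (q : Fin (r+1) → ℂ) (a b : Fin r → ℂ) :
    ((∑ ℓ : Fin (r + 1), C (q ℓ) * X 0 ^ (ℓ : ℕ) * X 1 ^ (r - (ℓ : ℕ))
        : MvPolynomial (Fin 2) ℂ)
        = ∏ j, (C (b j) * X 0 - C (a j) * X 1))
    ↔ ∀ ℓ : Fin (r+1), q ℓ = (∏ j, linPoly (a j, b j)).coeff (ℓ:ℕ) := by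
  rw [← homog_ofVec, ← homog_prod_fin]
  constructor
  · intro h
    exact (ofVec_eq_iff q _ (natDegree_prod_fin a b)).mp
      (homog_inj r (natDegree_ofVec q) (natDegree_prod_fin a b) h)
  · intro h
    rw [(ofVec_eq_iff q _ (natDegree_prod_fin a b)).mpr h]

lemma E1_iff (d r : ℕ) (c : Fin (d+1) → ℂ) (α β lam : Fin r → ℂ) :
    ((∑ i : Fin (d + 1), C ((d.choose i) * c i) * X 0 ^ (i : ℕ) * X 1 ^ (d - (i : ℕ))
        : MvPolynomial (Fin 2) ℂ)
        = ∑ j, C (lam j) * (C (α j) * X 0 + C (β j) * X 1) ^ d)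
    ↔ ∀ i : Fin (d+1), c i = ∑ j, lam j * α j ^ (i:ℕ) * β j ^ (d-(i:ℕ)) := by
  set w : Fin (d+1) → ℂ := fun i => ((d.choose (i:ℕ) : ℕ) : ℂ) * c i with hw
  set G : Polynomial ℂ := ∑ j, Polynomial.C (lam j)
    * (Polynomial.C (α j) * Polynomial.X + Polynomial.C (β j))^d with hG
  have hGdeg : G.natDegree ≤ d := by
    refine Polynomial.natDegree_sum_le_of_forall_le _ _ fun j _ => ?_
    refine le_trans (Polynomial.natDegree_C_mul_le _ _) ?_
    refine le_trans (Polynomial.natDegree_pow_le) ?_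
    calc d * (Polynomial.C (α j) * Polynomial.X + Polynomial.C (β j)).natDegree
        ≤ d * 1 := Nat.mul_le_mul_left d Polynomial.natDegree_linear_le
      _ = d := mul_one d
  have hcoG : ∀ i : Fin (d+1), G.coeff (i:ℕ)
      = ((d.choose (i:ℕ) : ℕ) : ℂ) * ∑ j, lam j * α j ^ (i:ℕ) * β j ^ (d-(i:ℕ)) := by
    intro i
    rw [hG, Polynomial.finset_sum_coeff, Finset.mul_sum]
    refine Finset.sum_congr rfl fun j _ => ?_
    rw [Polynomial.coeff_C_mul, coeff_linear_pow d (i:ℕ) _ _ (by have := i.isLt; omega)]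
    ring
  have hch : ∀ i : Fin (d+1), ((d.choose (i:ℕ) : ℕ) : ℂ) ≠ 0 := fun i =>
    Nat.cast_ne_zero.mpr (Nat.choose_pos (by have := i.isLt; omega)).ne'
  have hL : (∑ i : Fin (d + 1), C ((d.choose i) * c i) * X 0 ^ (i : ℕ) * X 1 ^ (d - (i : ℕ))
      : MvPolynomial (Fin 2) ℂ) = homog d (ofVec w) := (homog_ofVec w).symm
  have hR : (∑ j, C (lam j) * (C (α j) * X 0 + C (β j) * X 1) ^ d
      : MvPolynomial (Fin 2) ℂ) = homog d G := by
    rw [hG, homog_sum]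
    refine Finset.sum_congr rfl fun j _ => ?_
    rw [homog_Cmul, homog_linear_pow]
  rw [hL, hR]
  constructor
  · intro h
    have hWG := (ofVec_eq_iff w G hGdeg).mp (homog_inj d (natDegree_ofVec w) hGdeg h)
    intro i
    have := (hWG i).trans (hcoG i)
    exact mul_left_cancel₀ (hch i) this
  · intro h
    rw [(ofVec_eq_iff w G hGdeg).mpr fun i => by rw [hcoG i, hw, ← h i]]

/-- Sylvester's theorem for binary forms. -/
theorem binary_form_decomposition (d r : ℕ) (hr : r ≤ d) (c : Fin (d + 1) → ℂ) :
    (∃ (α β lam : Fin r → ℂ),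
      (∀ j, (α j, β j) ≠ (0, 0)) ∧
      (∀ j k, j ≠ k → α j * β k ≠ α k * β j) ∧
      (∑ i : Fin (d + 1), C ((d.choose i) * c i) * X 0 ^ (i : ℕ) * X 1 ^ (d - (i : ℕ))
          : MvPolynomial (Fin 2) ℂ)
        = ∑ j, C (lam j) * (C (α j) * X 0 + C (β j) * X 1) ^ d) ↔
    (∃ q : Fin (r + 1) → ℂ, q ≠ 0 ∧
      (∀ i : Fin (d - r + 1), ∑ j : Fin (r + 1),
          c ⟨(i : ℕ) + (j : ℕ), by have hi := i.isLt; have hj := j.isLt; omega⟩ * q j = 0) ∧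
      ∃ a b : Fin r → ℂ,
        (∀ j k, j ≠ k → a j * b k ≠ a k * b j) ∧
        (∑ ℓ : Fin (r + 1), C (q ℓ) * X 0 ^ (ℓ : ℕ) * X 1 ^ (r - (ℓ : ℕ))
            : MvPolynomial (Fin 2) ℂ)
          = ∏ j, (C (b j) * X 0 - C (a j) * X 1)) := by
  constructor
  · rintro ⟨α, β, lam, hnz, hpair, hE1⟩
    have hC1 := (E1_iff d r c α β lam).mp hE1
    refine ⟨fun ℓ => (∏ j, linPoly (α j, β j)).coeff (ℓ:ℕ), ?_, ?_, α, β, hpair, ?_⟩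
    · have hFne : (∏ j, linPoly (α j, β j)) ≠ 0 :=
        Finset.prod_ne_zero_iff.mpr fun j _ => linPoly_ne_zero (hnz j)
      intro hq0
      apply hFne
      ext k
      rw [Polynomial.coeff_zero]
      by_cases hk : k ≤ r
      · have := congrFun hq0 ⟨k, by omega⟩
        simpa using this
      · exact Polynomial.coeff_eq_zero_of_natDegree_lt
          (lt_of_le_of_lt (natDegree_prod_fin α β) (by omega))
    · intro i
      have h := kernel_step hr α β lam (i:ℕ) (by have := i.isLt; omega)
      rw [← h]
      refine Finset.sum_congr rfl fun ℓ _ => ?_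
      congr 1
      have := hC1 ⟨(i:ℕ)+(ℓ:ℕ), by have := i.isLt; have := ℓ.isLt; omega⟩
      simpa using this
    · exact (E2_iff r _ α β).mpr fun ℓ => rfl
  · rintro ⟨q, hq0, hker, a, b, hpair, hE2⟩
    have hC2 := (E2_iff r q a b).mp hE2
    have hnz : ∀ j, (a j, b j) ≠ (0,0) := by
      intro j hj
      apply hq0
      have hF0 : (∏ k, linPoly (a k, b k)) = 0 :=
        Finset.prod_eq_zero (Finset.mem_univ j) (by rw [hj]; simp [linPoly])
      funext ℓ
      rw [hC2 ℓ, hF0, Polynomial.coeff_zero]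
      rfl
    have hker' : ∀ i : Fin (d - r + 1), ∑ ℓ : Fin (r + 1),
        c ⟨(i:ℕ)+(ℓ:ℕ), by have := i.isLt; have := ℓ.isLt; omega⟩
          * (∏ j, linPoly (a j, b j)).coeff (ℓ:ℕ) = 0 := by
      intro i
      rw [← hker i]
      exact Finset.sum_congr rfl fun ℓ _ => by rw [hC2 ℓ]
    obtain ⟨lam, hlam⟩ := key_exists d r hr a b hnz hpair c hker'
    exact ⟨a, b, lam, hnz, hpair, (E1_iff d r c a b lam).mpr hlam⟩
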